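/- For all real x and t, Σ_{n=0}^∞ (−1)^n t^n L_n(x)/n! = exp(−t) · Σ_{k=0}^∞ (xt)^k/(k!)², where both series converge absolutely; equivalently, for x, t ≥ 0 the right-hand side equals exp(−t)·I_0(2√(xt)). -/

import Mathlib

open MeasureTheory Real Finset

/-- Modified Bessel function of the first kind of integer order `n`. -/
noncomputable def besselI (n : ℕ) (x : ℝ) : ℝ :=
  ∑' k : ℕ, (x / 2) ^ (n + 2 * k) / (Nat.factorial k * Nat.factorial (n + k))

/-- Laguerre polynomial of degree `n`. -/
noncomputable def laguerre (n : ℕ) (x : ℝ) : ℝ :=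
  ∑ k ∈ Finset.range (n + 1),
    (-1 : ℝ) ^ k * Nat.factorial n * x ^ k /
      ((Nat.factorial k) ^ 2 * Nat.factorial (n - k))

private lemma cauchy_term_eq (x t : ℝ) (n : ℕ) :
    ∑ k ∈ Finset.range (n + 1),
      ((x * t) ^ k / ((Nat.factorial k : ℝ)) ^ 2) *
        ((-t) ^ (n - k) / (Nat.factorial (n - k) : ℝ)) =
    (-1 : ℝ) ^ n * t ^ n * laguerre n x / Nat.factorial n := by
  rw [laguerre, Finset.mul_sum, Finset.sum_div]
  refine Finset.sum_congr rfl fun k hk => ?_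
  have hk' : k ≤ n := Nat.lt_succ_iff.mp (Finset.mem_range.mp hk)
  obtain ⟨m, rfl⟩ : ∃ m, n = k + m := ⟨n - k, by omega⟩
  have hk0 : ((Nat.factorial k : ℝ)) ≠ 0 := Nat.cast_ne_zero.mpr k.factorial_ne_zero
  have hm0 : ((Nat.factorial m : ℝ)) ≠ 0 := Nat.cast_ne_zero.mpr m.factorial_ne_zero
  have hkm0 : ((Nat.factorial (k + m) : ℝ)) ≠ 0 := Nat.cast_ne_zero.mpr (k + m).factorial_ne_zero
  rw [Nat.add_sub_cancel_left]
  have h1 : (-1 : ℝ) ^ (k + m) * (-1 : ℝ) ^ k = (-1) ^ m := by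
    rw [← pow_add, show k + m + k = m + 2 * k by omega, pow_add, pow_mul]
    simp
  rw [show ((-t) : ℝ) ^ m = (-1) ^ m * t ^ m from by rw [neg_pow]]
  field_simp
  rw [← h1]
  ring

private lemma a_norm_summable (x t : ℝ) :
    Summable (fun k : ℕ => ‖(x * t) ^ k / ((Nat.factorial k : ℝ)) ^ 2‖) := by
  refine Summable.of_nonneg_of_le (fun k => norm_nonneg _) (fun k => ?_)
    (Real.summable_pow_div_factorial |x * t|)
  rw [Real.norm_eq_abs, abs_div, abs_pow, abs_pow]
  rw [show |(Nat.factorial k : ℝ)| = (Nat.factorial k : ℝ) from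
    abs_of_nonneg (by positivity)]
  refine div_le_div_of_nonneg_left (by positivity) (by positivity) ?_
  have h1 : (1 : ℝ) ≤ (Nat.factorial k : ℝ) := by
    exact_mod_cast Nat.one_le_iff_ne_zero.mpr k.factorial_ne_zero
  nlinarith

private lemma b_norm_summable (t : ℝ) :
    Summable (fun m : ℕ => ‖(-t) ^ m / (Nat.factorial m : ℝ)‖) := by
  refine (Real.summable_pow_div_factorial |t|).congr fun m => ?_
  rw [Real.norm_eq_abs, abs_div, abs_pow, abs_neg]
  rw [show |(Nat.factorial m : ℝ)| = (Nat.factorial m : ℝ) from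
    abs_of_nonneg (by positivity)]

theorem laguerre_genfun_eq_besselI (x t : ℝ) :
    Summable (fun n : ℕ => |(-1 : ℝ) ^ n * t ^ n * laguerre n x / Nat.factorial n|) ∧
    Summable (fun k : ℕ => |(x * t) ^ k / ((Nat.factorial k : ℝ)) ^ 2|) ∧
    (∑' n : ℕ, (-1 : ℝ) ^ n * t ^ n * laguerre n x / Nat.factorial n) =
      Real.exp (-t) * ∑' k : ℕ, (x * t) ^ k / ((Nat.factorial k : ℝ)) ^ 2 ∧
    (0 ≤ x → 0 ≤ t →
      Real.exp (-t) * (∑' k : ℕ, (x * t) ^ k / ((Nat.factorial k : ℝ)) ^ 2) =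
        Real.exp (-t) * besselI 0 (2 * Real.sqrt (x * t))) := by
  have ha := a_norm_summable x t
  have hb := b_norm_summable t
  have hexp : Real.exp (-t) = ∑' m : ℕ, (-t) ^ m / (Nat.factorial m : ℝ) := by
    rw [Real.exp_eq_exp_ℝ, NormedSpace.exp_eq_tsum_div]
  refine ⟨?_, ?_, ?_, ?_⟩
  · have := summable_norm_sum_mul_range_of_summable_norm ha hb
    refine this.congr fun n => ?_
    rw [cauchy_term_eq, Real.norm_eq_abs]
  · exact ha.congr fun k => (Real.norm_eq_abs _).symm
  · have h := tsum_mul_tsum_eq_tsum_sum_range_of_summable_norm ha hb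
    simp_rw [cauchy_term_eq x t] at h
    rw [← h, ← hexp, mul_comm]
  · intro hx ht
    congr 1
    rw [besselI]
    refine tsum_congr fun k => ?_
    have h2 : ((2 : ℝ) * Real.sqrt (x * t) / 2) = Real.sqrt (x * t) := by ring
    rw [h2, zero_add, zero_add, pow_mul, Real.sq_sqrt (by positivity),
      sq ((Nat.factorial k : ℝ))]
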